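/- Let y : ℤ → ℝ → ℝ be a family of differentiable functions with y_{n+3}(t) ≠ y_n(t) for all n, t, satisfying for all n ∈ ℤ and t ∈ ℝ the equation ẏ_n = 1/((y_{n+2} − y_{n−1})(y_{n+1} − y_{n−2})). Define u_n(t) = −1/((y_{n+5}(t) − y_{n+2}(t))(y_{n+4}(t) − y_{n+1}(t))(y_{n+3}(t) − y_n(t))). Then for all n ∈ ℤ and t ∈ ℝ, u̇_n = u_n (u_{n+2} + u_{n+1} − u_{n−1} − u_{n−2}), i.e., u solves the INB equation; this exhibits a modification of the INB equation of the highest possible fifth level. -/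

import Mathlib

lemma inb_key (v1 v2 v3 v4 v5 v6 v7 : ℝ) (h1 : v1 ≠ 0) (h2 : v2 ≠ 0) (h3 : v3 ≠ 0)
    (h4 : v4 ≠ 0) (h5 : v5 ≠ 0) (h6 : v6 ≠ 0) (h7 : v7 ≠ 0) :
    -(v3 * v4 * v5)⁻¹ *
      (-(1 / (v1 * v2 * v3)) + -(1 / (v2 * v3 * v4)) - -(1 / (v4 * v5 * v6)) -
        -(1 / (v5 * v6 * v7))) =
    -(-(((1 / (v1 * v2) - 1 / (v4 * v5)) * v4 + v3 * (1 / (v2 * v3) - 1 / (v5 * v6))) * v5 +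
          v3 * v4 * (1 / (v3 * v4) - 1 / (v6 * v7))) / (v3 * v4 * v5) ^ 2) := by
  field_simp
  ring

/-- Equation `ẏₙ = 1/((y_{n+2}−y_{n−1})(y_{n+1}−y_{n−2}))` is transformed into
the INB equation by the fifth-order transformation
`uₙ = −1/((y_{n+5}−y_{n+2})(y_{n+4}−y_{n+1})(y_{n+3}−yₙ))`;
this is a modification of the INB equation of the highest possible fifth level. -/
theorem stmt_17 (y : ℤ → ℝ → ℝ)
    (hyne : ∀ (n : ℤ) (t : ℝ), y (n + 3) t ≠ y n t)
    (hy : ∀ (n : ℤ) (t : ℝ), HasDerivAt (y n)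
      (1 / ((y (n + 2) t - y (n - 1) t) * (y (n + 1) t - y (n - 2) t))) t)
    (u : ℤ → ℝ → ℝ)
    (hu : ∀ (n : ℤ) (t : ℝ),
      u n t = -(1 / ((y (n + 5) t - y (n + 2) t) * (y (n + 4) t - y (n + 1) t)
        * (y (n + 3) t - y n t)))) :
    ∀ (n : ℤ) (t : ℝ), HasDerivAt (u n)
      (u n t * (u (n + 2) t + u (n + 1) t - u (n - 1) t - u (n - 2) t)) t := by
  intro n t
  have hne : ∀ m : ℤ, y (m + 3) t - y m t ≠ 0 := fun m => sub_ne_zero.mpr (hyne m t)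
  have e1 : y (n+7) t - y (n+4) t ≠ 0 := by
    have := hne (n+4); rwa [show n+4+3 = n+7 by ring] at this
  have e2 : y (n+6) t - y (n+3) t ≠ 0 := by
    have := hne (n+3); rwa [show n+3+3 = n+6 by ring] at this
  have e3 : y (n+5) t - y (n+2) t ≠ 0 := by
    have := hne (n+2); rwa [show n+2+3 = n+5 by ring] at this
  have e4 : y (n+4) t - y (n+1) t ≠ 0 := by
    have := hne (n+1); rwa [show n+1+3 = n+4 by ring] at this
  have e5 : y (n+3) t - y n t ≠ 0 := hne n
  have e6 : y (n+2) t - y (n-1) t ≠ 0 := by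
    have := hne (n-1); rwa [show n-1+3 = n+2 by ring] at this
  have e7 : y (n+1) t - y (n-2) t ≠ 0 := by
    have := hne (n-2); rwa [show n-2+3 = n+1 by ring] at this
  have h0 := hy n t
  have h1 : HasDerivAt (y (n+1)) (1 / ((y (n+3) t - y n t) * (y (n+2) t - y (n-1) t))) t := by
    have := hy (n+1) t
    rwa [show n+1+2 = n+3 by ring, show n+1-1 = n by ring, show n+1+1 = n+2 by ring,
      show n+1-2 = n-1 by ring] at this
  have h2 : HasDerivAt (y (n+2)) (1 / ((y (n+4) t - y (n+1) t) * (y (n+3) t - y n t))) t := by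
    have := hy (n+2) t
    rwa [show n+2+2 = n+4 by ring, show n+2-1 = n+1 by ring, show n+2+1 = n+3 by ring,
      show n+2-2 = n by ring] at this
  have h3 : HasDerivAt (y (n+3)) (1 / ((y (n+5) t - y (n+2) t) * (y (n+4) t - y (n+1) t))) t := by
    have := hy (n+3) t
    rwa [show n+3+2 = n+5 by ring, show n+3-1 = n+2 by ring, show n+3+1 = n+4 by ring,
      show n+3-2 = n+1 by ring] at this
  have h4 : HasDerivAt (y (n+4)) (1 / ((y (n+6) t - y (n+3) t) * (y (n+5) t - y (n+2) t))) t := by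
    have := hy (n+4) t
    rwa [show n+4+2 = n+6 by ring, show n+4-1 = n+3 by ring, show n+4+1 = n+5 by ring,
      show n+4-2 = n+2 by ring] at this
  have h5 : HasDerivAt (y (n+5)) (1 / ((y (n+7) t - y (n+4) t) * (y (n+6) t - y (n+3) t))) t := by
    have := hy (n+5) t
    rwa [show n+5+2 = n+7 by ring, show n+5-1 = n+4 by ring, show n+5+1 = n+6 by ring,
      show n+5-2 = n+3 by ring] at this
  have hA := h5.sub h2
  have hB := h4.sub h1
  have hC := h3.sub h0
  have hABC := (hA.mul hB).mul hC
  have habc : (y (n+5) t - y (n+2) t) * (y (n+4) t - y (n+1) t) * (y (n+3) t - y n t) ≠ 0 :=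
    mul_ne_zero (mul_ne_zero e3 e4) e5
  have hf := (hABC.inv habc).neg
  have hufun : u n = fun s =>
      -(((y (n+5) s - y (n+2) s) * (y (n+4) s - y (n+1) s) * (y (n+3) s - y n s))⁻¹) := by
    funext s; rw [hu n s, one_div]
  rw [hufun]
  convert hf using 1
  case e'_4 => rfl
  case e'_5 => rfl
  case e'_8 => rfl
  rw [hu (n+2) t, hu (n+1) t, hu (n-1) t, hu (n-2) t,
    show n+2+5 = n+7 by ring, show n+2+2 = n+4 by ring, show n+2+4 = n+6 by ring,
    show n+2+1 = n+3 by ring, show n+2+3 = n+5 by ring,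
    show n+1+5 = n+6 by ring, show n+1+2 = n+3 by ring, show n+1+4 = n+5 by ring,
    show n+1+1 = n+2 by ring, show n+1+3 = n+4 by ring,
    show n-1+5 = n+4 by ring, show n-1+2 = n+1 by ring, show n-1+4 = n+3 by ring,
    show n-1+1 = n by ring, show n-1+3 = n+2 by ring,
    show n-2+5 = n+3 by ring, show n-2+2 = n by ring, show n-2+4 = n+2 by ring,
    show n-2+1 = n-1 by ring, show n-2+3 = n+1 by ring]
  exact inb_key _ _ _ _ _ _ _ e1 e2 e3 e4 e5 e6 e7
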